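/- arXiv:1204.5582 — 2 statements merged into one kernel-verified Lean document; each statement's English description precedes it below -/
import Mathlib

section
/- The class PCSF is closed under predicative function recursion: if h is in PCSF, then so is f defined by f(x,ȳ/ā) = h(x,ȳ/ā, f↾x), where f↾x = {⟨z, f(z,ȳ/ā)⟩ : z∈x} with Kuratowski pairs. Conversely, every PCSF function is generated from the PCSF⁻ functions and projections by safe composition and predicative function recursion (in place of predicative set recursion). -/
open scoped Classical

noncomputable section

namespace PCSFPaper

/-! ## Basic ZF-set helpers -/

/-- Image `{f z : z ∈ x}` of a ZF-set under an arbitrary class function. -/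
noncomputable def zImage (f : ZFSet → ZFSet) (x : ZFSet) : ZFSet :=
  @ZFSet.image f (Classical.allZFSetDefinable fun s => f (s 0)) x

/-- Kuratowski ordered pair `⟨c,d⟩ = {{c},{c,d}}`. -/
def kpair (c d : ZFSet) : ZFSet := {{c}, {c, d}}

/-! ## Δ₀ formulas of the language of set theory -/

/-- Δ₀ (bounded) formulas in the first-order language of set theory,
with `k` free variables.  In the bounded quantifiers `ball i φ`/`bex i φ`
the newly bound variable (ranging over the elements of variable `i`)
becomes variable `0` of `φ`, the old variables being shifted up by one. -/
inductive D0 : ℕ → Type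
  | mem {k : ℕ} (i j : Fin k) : D0 k
  | eq {k : ℕ} (i j : Fin k) : D0 k
  | not {k : ℕ} : D0 k → D0 k
  | and {k : ℕ} : D0 k → D0 k → D0 k
  | or {k : ℕ} : D0 k → D0 k → D0 k
  | ball {k : ℕ} (i : Fin k) : D0 (k + 1) → D0 k
  | bex {k : ℕ} (i : Fin k) : D0 (k + 1) → D0 k

/-- Satisfaction of Δ₀ formulas in the universe of ZF-sets. -/
def D0.Sat : ∀ {k : ℕ}, D0 k → (Fin k → ZFSet) → Prop
  | _, .mem i j, v => v i ∈ v j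
  | _, .eq i j, v => v i = v j
  | _, .not φ, v => ¬ φ.Sat v
  | _, .and φ ψ, v => φ.Sat v ∧ ψ.Sat v
  | _, .or φ ψ, v => φ.Sat v ∨ ψ.Sat v
  | _, .ball i φ, v => ∀ z ∈ v i, φ.Sat (Fin.cons z v)
  | _, .bex i φ, v => ∃ z ∈ v i, φ.Sat (Fin.cons z v)

/-- A `k`-ary relation on sets is Δ₀ iff it is defined by some Δ₀ formula. -/
def IsDelta0 {k : ℕ} (R : (Fin k → ZFSet) → Prop) : Prop :=
  ∃ φ : D0 k, ∀ v, R v ↔ φ.Sat v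

/-! ## The classes PCSF⁻ and PCSF -/

/-- The class `PCSF⁻` of predicatively computable set functions taking only
safe arguments: generated from projections, pairing, null, union and the
membership conditional, by composition and safe separation. -/
inductive PCSFminus : ∀ m : ℕ, ((Fin m → ZFSet) → ZFSet) → Prop
  | proj {m : ℕ} (j : Fin m) : PCSFminus m fun a => a j
  | pair : PCSFminus 2 fun a => {a 0, a 1}
  | null : PCSFminus 0 fun _ => ∅
  | union : PCSFminus 1 fun a => ZFSet.sUnion (a 0)
  | cond : PCSFminus 4 fun a => if a 2 ∈ a 3 then a 0 else a 1
  | comp {m k : ℕ} (h : (Fin k → ZFSet) → ZFSet) (t : Fin k → (Fin m → ZFSet) → ZFSet) :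
      PCSFminus k h → (∀ i, PCSFminus m (t i)) →
      PCSFminus m fun a => h fun i => t i a
  | sep {m : ℕ} (h : (Fin (m + 1) → ZFSet) → ZFSet) :
      PCSFminus (m + 1) h →
      PCSFminus (m + 1) fun a =>
        ZFSet.sep (fun b => h (Fin.snoc (Fin.init a) b) ≠ ∅) (a (Fin.last m))

/-- The class `PCSF` of predicatively computable set functions, with `n` normal
and `m` safe arguments: generated from `PCSF⁻` (whose arguments are all safe)
and projections by safe composition and predicative set recursion.  The
recursion rule is stated via its defining equation (which determines the
function uniquely, by ∈-induction); the recursion argument `x` is the first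
normal argument, and the set `{f(z,ȳ/ā) : z ∈ x}` of previous values is passed
to `h` as a last, safe, argument. -/
inductive PCSF : ∀ n m : ℕ, ((Fin n → ZFSet) → (Fin m → ZFSet) → ZFSet) → Prop
  | ofMinus {m : ℕ} (h : (Fin m → ZFSet) → ZFSet) :
      PCSFminus m h → PCSF 0 m fun _ a => h a
  | proj {n m : ℕ} (j : Fin (n + m)) : PCSF n m fun x a => Fin.append x a j
  | comp {n m k l : ℕ} (h : (Fin k → ZFSet) → (Fin l → ZFSet) → ZFSet)
      (r : Fin k → (Fin n → ZFSet) → (Fin 0 → ZFSet) → ZFSet)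
      (t : Fin l → (Fin n → ZFSet) → (Fin m → ZFSet) → ZFSet) :
      PCSF k l h → (∀ i, PCSF n 0 (r i)) → (∀ i, PCSF n m (t i)) →
      PCSF n m fun x a => h (fun i => r i x Fin.elim0) fun i => t i x a
  | recur {n m : ℕ} (h : (Fin (n + 1) → ZFSet) → (Fin (m + 1) → ZFSet) → ZFSet)
      (f : (Fin (n + 1) → ZFSet) → (Fin m → ZFSet) → ZFSet) :
      PCSF (n + 1) (m + 1) h →
      (∀ (x : ZFSet) (y : Fin n → ZFSet) (a : Fin m → ZFSet),
        f (Fin.cons x y) a =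
          h (Fin.cons x y) (Fin.snoc a (zImage (fun z => f (Fin.cons z y) a) x))) →
      PCSF (n + 1) m f

/-- A relation is in `PCSF` iff its characteristic function
(`1 = {∅}` for true, `0 = ∅` for false) is in `PCSF`. -/
def PCSFRel (n m : ℕ) (R : (Fin n → ZFSet) → (Fin m → ZFSet) → Prop) : Prop :=
  PCSF n m fun x a => if R x a then ({∅} : ZFSet) else ∅

/-! ## Transitive closure, hereditary finiteness -/

/-- Transitive closure `TC(x) = x ∪ ⋃{TC(y) : y ∈ x}` by ∈-recursion. -/
noncomputable def TCset : ZFSet → ZFSet :=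
  ZFSet.mem_wf.fix fun x ih =>
    x ∪ ZFSet.sUnion (zImage (fun y => if h : y ∈ x then ih y h else ∅) x)

/-- A set is hereditarily finite iff its transitive closure is finite. -/
def IsHF (x : ZFSet) : Prop := (TCset x).toSet.Finite

/-- `cT x` = cardinality of the transitive closure of `x`
(junk value `0` if infinite). -/
noncomputable def cT (x : ZFSet) : ℕ := (TCset x).toSet.ncard

/-- The finite union `A₁ ∪ ⋯ ∪ Aₘ`. -/
def unionFin {m : ℕ} (A : Fin m → ZFSet) : ZFSet :=
  (List.ofFn A).foldr (· ∪ ·) ∅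

/-! ## The encoding ν of binary strings, application, product -/

/-- The von Neumann numeral 1 = {∅}. -/
def zOne : ZFSet := {∅}

/-- The von Neumann numeral 2 = {∅,{∅}}. -/
def zTwo : ZFSet := {∅, {∅}}

/-- The encoding of binary strings (head of the list = last appended bit):
`ν(ε) = ∅` and `ν(s i) = ⟨i+1, ν s⟩`, a bit `i ∈ {0,1}` being represented
by the boolean `i = 1`. -/
def nu : List Bool → ZFSet
  | [] => ∅
  | b :: s => kpair (if b then zTwo else zOne) (nu s)

/-- `zApp b c = b'c = ⋃{d ∈ ⋃⋃b : ⟨c,d⟩ ∈ b}` (which is `⋃{d : ⟨c,d⟩ ∈ b}`,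
since every such `d` belongs to `⋃⋃b`). -/
def zApp (b c : ZFSet) : ZFSet :=
  ZFSet.sUnion (ZFSet.sep (fun d => kpair c d ∈ b) (ZFSet.sUnion (ZFSet.sUnion b)))

/-- Cartesian product `a × b = {⟨u,v⟩ : u ∈ a, v ∈ b}` (with Kuratowski pairs). -/
noncomputable def zProd (a b : ZFSet) : ZFSet :=
  ZFSet.sUnion (zImage (fun u => zImage (fun v => kpair u v) b) a)

/-! ## Polynomial time computability on binary strings -/

/-- The trivial encoding of binary strings over the alphabet `Bool`. -/
def boolListEncoding : Computability.Encoding (List Bool) Bool where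
  encode := id
  decode := fun l => some l
  decode_encode := fun _ => rfl

/-- Encoding of a tuple of binary strings over the alphabet `Option Bool`:
the strings are listed in order, each terminated by the separator `none`. -/
def encTuple : (k : ℕ) → (Fin k → List Bool) → List (Option Bool)
  | 0, _ => []
  | k + 1, v => (v 0).map some ++ none :: encTuple k (Fin.tail v)

/-- Splits off the first separator-terminated block. -/
def splitFirst : List (Option Bool) → List Bool × List (Option Bool)
  | [] => ([], [])
  | none :: l => ([], l)
  | some b :: l => ((splitFirst l).1.cons b, (splitFirst l).2)

theorem splitFirst_encode (s : List Bool) (rest : List (Option Bool)) :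
    splitFirst (s.map some ++ none :: rest) = (s, rest) := by
  induction s with
  | nil => rfl
  | cons b s ih => simp [splitFirst, ih]

/-- Decoding of tuples of binary strings. -/
def decTuple : (k : ℕ) → List (Option Bool) → Option (Fin k → List Bool)
  | 0, _ => some Fin.elim0
  | k + 1, l =>
    (decTuple k (splitFirst l).2).map fun v => Fin.cons (splitFirst l).1 v

theorem decTuple_encTuple : ∀ (k : ℕ) (v : Fin k → List Bool),
    decTuple k (encTuple k v) = some v := by
  intro k
  induction k with
  | zero =>
    intro v
    simp only [decTuple]
    congr
    exact funext fun i => i.elim0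
  | succ k ih =>
    intro v
    simp [decTuple, encTuple, splitFirst_encode, ih (Fin.tail v), Fin.cons_self_tail]

/-- The standard encoding of tuples of binary strings. -/
def tupleEncoding (k : ℕ) : Computability.Encoding (Fin k → List Bool) (Option Bool) where
  encode := encTuple k
  decode := decTuple k
  decode_encode := decTuple_encTuple k

/-- A function on tuples of binary strings is polynomial time computable iff
some two-stack machine computes it in polynomial time (Mathlib's notion). -/
def PolyTimeStringFun {k : ℕ} (f : (Fin k → List Bool) → List Bool) : Prop :=
  Nonempty (Turing.TM2ComputableInPolyTime (tupleEncoding k).encode boolListEncoding.encode f)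

/-- Polynomial time computability for functions on ℕ,
with respect to the standard binary encoding of naturals. -/
def PolyTimeNatFun (f : ℕ → ℕ) : Prop :=
  Nonempty (Turing.TM2ComputableInPolyTime Computability.encodingNatBool.encode
    Computability.encodingNatBool.encode f)

/-! ## A feasible encoding of lists of naturals by naturals -/

/-- Reads a list of bits (least significant first) as a natural number. -/
def bitsToNat (l : List Bool) : ℕ := l.foldr (fun b n => Nat.bit b n) 0

/-- A standard feasible (linear size) encoding of lists of natural numbers:
every bit of the binary expansion of an entry is escaped as `[false, b]`,
entries are terminated by `[true, true]`, and a final `true` protects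
leading zeros. -/
def encodeNatList (l : List ℕ) : ℕ :=
  bitsToNat
    ((l.map fun n => (Nat.bits n).foldr (fun b acc => false :: b :: acc) [true, true]).foldr
        (· ++ ·) [true])

/-! ## Rooted DAGs encoding hereditarily finite sets -/

/-- A rooted DAG: a finite set `V` of natural numbers, edges `E ⊆ V × V`
going strictly downwards, and a root `r ∈ V` which is the only node of
indegree zero. -/
structure RootedDag where
  V : Finset ℕ
  E : Finset (ℕ × ℕ)
  r : ℕ
  edge_mem : ∀ e ∈ E, e.1 ∈ V ∧ e.2 ∈ V
  root_mem : r ∈ V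
  root_indeg : ∀ e ∈ E, e.2 ≠ r
  reach_nonroot : ∀ a ∈ V, a ≠ r → ∃ b ∈ V, (b, a) ∈ E
  desc : ∀ e ∈ E, e.2 < e.1

namespace RootedDag

/-- The children of a node. -/
def children (G : RootedDag) (a : ℕ) : Finset ℕ :=
  (G.E.filter fun e => e.1 = a).image Prod.snd

theorem children_lt (G : RootedDag) {a b : ℕ} (h : b ∈ G.children a) : b < a := by
  simp only [children, Finset.mem_image, Finset.mem_filter] at h
  obtain ⟨e, ⟨heE, he1⟩, he2⟩ := h
  have := G.desc e heE
  omega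

/-- The hereditarily finite set encoded at a node:
`set_G(a) = {set_G(b) : (a,b) ∈ E}`. -/
def setAt (G : RootedDag) (a : ℕ) : ZFSet.{0} :=
  (((G.children a).attach.toList).map fun b => G.setAt b.1).foldr insert ∅
termination_by a
decreasing_by exact G.children_lt b.2

/-- The hereditarily finite set encoded by a rooted DAG. -/
def set (G : RootedDag) : ZFSet.{0} := G.setAt G.r

/-- A DAG is fully collapsed iff distinct nodes encode distinct sets. -/
def FullyCollapsed (G : RootedDag) : Prop :=
  ∀ a ∈ G.V, ∀ b ∈ G.V, G.setAt a = G.setAt b → a = b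

/-- Reachability along edges. -/
def Reaches (G : RootedDag) (a b : ℕ) : Prop :=
  Relation.ReflTransGen (fun u v => (u, v) ∈ G.E) a b

/-- The node set of the sub-DAG `G|a` of nodes reachable from `a`. -/
noncomputable def reachSet (G : RootedDag) (a : ℕ) : Finset ℕ :=
  G.V.filter fun b => G.Reaches a b

/-- A DAG is balanced iff each node `a` is at most the number of nodes of `G|a`. -/
def Balanced (G : RootedDag) : Prop :=
  ∀ a ∈ G.V, a ≤ (G.reachSet a).card

end RootedDag

/-- The numeric code `⌈G⌉` of a rooted DAG: the code of the triple consisting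
of (the code of) the sorted list of vertices, (the code of) the sorted list of
pair-coded edges, and the root. -/
noncomputable def RootedDag.code (G : RootedDag) : ℕ :=
  encodeNatList [encodeNatList (G.V.sort (· ≤ ·)),
    encodeNatList ((G.E.image fun e => Nat.pair e.1 e.2).sort (· ≤ ·)), G.r]

/-- The finite set `{l₀, …, l_{n-1}}` as a ZF-set. -/
def zSetOfList (l : List ZFSet) : ZFSet := l.foldr insert ∅

/-- The class generated from `PCSF⁻` and projections by safe composition and
*predicative function recursion* `f(x,ȳ/ā) = h(x,ȳ/ā, f↾x)`, with
`f↾x = {⟨z, f(z,ȳ/ā)⟩ : z ∈ x}`. -/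
inductive PCSFfun : ∀ n m : ℕ, ((Fin n → ZFSet) → (Fin m → ZFSet) → ZFSet) → Prop
  | ofMinus {m : ℕ} (h : (Fin m → ZFSet) → ZFSet) :
      PCSFminus m h → PCSFfun 0 m fun _ a => h a
  | proj {n m : ℕ} (j : Fin (n + m)) : PCSFfun n m fun x a => Fin.append x a j
  | comp {n m k l : ℕ} (h : (Fin k → ZFSet) → (Fin l → ZFSet) → ZFSet)
      (r : Fin k → (Fin n → ZFSet) → (Fin 0 → ZFSet) → ZFSet)
      (t : Fin l → (Fin n → ZFSet) → (Fin m → ZFSet) → ZFSet) :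
      PCSFfun k l h → (∀ i, PCSFfun n 0 (r i)) → (∀ i, PCSFfun n m (t i)) →
      PCSFfun n m fun x a => h (fun i => r i x Fin.elim0) fun i => t i x a
  | frecur {n m : ℕ} (h : (Fin (n + 1) → ZFSet) → (Fin (m + 1) → ZFSet) → ZFSet)
      (f : (Fin (n + 1) → ZFSet) → (Fin m → ZFSet) → ZFSet) :
      PCSFfun (n + 1) (m + 1) h →
      (∀ (x : ZFSet) (y : Fin n → ZFSet) (a : Fin m → ZFSet),
        f (Fin.cons x y) a =
          h (Fin.cons x y)
            (Fin.snoc a (zImage (fun z => kpair z (f (Fin.cons z y) a)) x))) →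
      PCSFfun (n + 1) m f

/-! ## Auxiliary machinery for Statement 12 -/

section Aux12

theorem zImage_mem {f : ZFSet → ZFSet} {x y : ZFSet} :
    y ∈ zImage f x ↔ ∃ z ∈ x, f z = y :=
  @ZFSet.mem_image f (Classical.allZFSetDefinable _) x y

theorem zpair_self (x : ZFSet) : ({x, x} : ZFSet) = {x} := by
  ext z; simp [ZFSet.mem_pair]

theorem zone_ne_empty : ({∅} : ZFSet) ≠ ∅ := by
  intro h
  have : (∅ : ZFSet) ∈ ({∅} : ZFSet) := by simp
  rw [h] at this
  exact ZFSet.notMem_empty _ this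

namespace PCSFminus

theorem congr' {m : ℕ} {f g : (Fin m → ZFSet) → ZFSet} (h : PCSFminus m f) (e : f = g) :
    PCSFminus m g := e ▸ h

theorem comp' {m k : ℕ} {h : (Fin k → ZFSet) → ZFSet} {t : Fin k → (Fin m → ZFSet) → ZFSet}
    (hh : PCSFminus k h) (ht : ∀ i, PCSFminus m (t i))
    {g : (Fin m → ZFSet) → ZFSet} (e : ∀ a, h (fun i => t i a) = g a) : PCSFminus m g :=
  (comp h t hh ht).congr' (funext e)

theorem subst {m k : ℕ} {g : (Fin m → ZFSet) → ZFSet} (hg : PCSFminus m g) (σ : Fin m → Fin k) :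
    PCSFminus k fun a => g fun i => a (σ i) :=
  comp g (fun i a => a (σ i)) hg fun i => proj (σ i)

theorem emptyF {m : ℕ} : PCSFminus m fun _ => (∅ : ZFSet) :=
  comp' (t := Fin.elim0) null (fun i => i.elim0) (fun _ => rfl)

theorem pairF {m : ℕ} {g1 g2 : (Fin m → ZFSet) → ZFSet}
    (h1 : PCSFminus m g1) (h2 : PCSFminus m g2) :
    PCSFminus m fun a => ({g1 a, g2 a} : ZFSet) :=
  comp' (t := ![g1, g2]) pair (by intro i; fin_cases i <;> simpa) (by intro a; simp)

theorem singF {m : ℕ} {g : (Fin m → ZFSet) → ZFSet} (h : PCSFminus m g) :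
    PCSFminus m fun a => ({g a} : ZFSet) :=
  (pairF h h).congr' (funext fun a => zpair_self _)

theorem unionF {m : ℕ} {g : (Fin m → ZFSet) → ZFSet} (h : PCSFminus m g) :
    PCSFminus m fun a => ZFSet.sUnion (g a) :=
  comp' (t := ![g]) union (by intro i; fin_cases i <;> simpa) (by intro a; simp)

theorem condF {m : ℕ} {g1 g2 g3 g4 : (Fin m → ZFSet) → ZFSet}
    (h1 : PCSFminus m g1) (h2 : PCSFminus m g2) (h3 : PCSFminus m g3) (h4 : PCSFminus m g4) :
    PCSFminus m fun a => if g3 a ∈ g4 a then g1 a else g2 a :=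
  comp' (t := ![g1, g2, g3, g4]) cond (by intro i; fin_cases i <;> simpa) (by intro a; simp)

theorem oneF {m : ℕ} : PCSFminus m fun _ => ({∅} : ZFSet) := singF emptyF

theorem sepF {m : ℕ} {g : (Fin m → ZFSet) → ZFSet} {χ : (Fin (m + 1) → ZFSet) → ZFSet}
    (hg : PCSFminus m g) (hχ : PCSFminus (m + 1) χ)
    (R : (Fin m → ZFSet) → ZFSet → Prop)
    (hrep : ∀ a b, (χ (Fin.snoc a b) ≠ ∅ ↔ R a b)) :
    PCSFminus m fun a => ZFSet.sep (fun b => R a b) (g a) := by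
  refine comp'
    (t := (Fin.snoc (fun j (a : Fin m → ZFSet) => a j) g :
      Fin (m + 1) → (Fin m → ZFSet) → ZFSet)) (sep χ hχ) ?_ ?_
  · intro i
    induction i using Fin.lastCases with
    | last => simpa using hg
    | cast j => simpa using proj (m := m) j
  · intro a
    have hv : (fun i => (Fin.snoc (fun j (a : Fin m → ZFSet) => a j) g :
        Fin (m + 1) → (Fin m → ZFSet) → ZFSet) i a) = (Fin.snoc a (g a) : Fin (m+1) → ZFSet) := by
      funext i
      induction i using Fin.lastCases with
      | last => simp
      | cast j => simp
    show ZFSet.sep _ _ = _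
    rw [hv]
    ext z
    simp only [ZFSet.mem_sep, Fin.init_snoc, Fin.snoc_last, hrep]

end PCSFminus

/-- Normalized representability of a relation by a `PCSF⁻` characteristic function. -/
def Rep (m : ℕ) (R : (Fin m → ZFSet) → Prop) : Prop :=
  ∃ χ, PCSFminus m χ ∧ ∀ a, χ a = if R a then ({∅} : ZFSet) else ∅

namespace Rep

theorem ne_iff {m : ℕ} {χ : (Fin m → ZFSet) → ZFSet} {R : (Fin m → ZFSet) → Prop}
    (hv : ∀ a, χ a = if R a then ({∅} : ZFSet) else ∅) (a : Fin m → ZFSet) :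
    χ a ≠ ∅ ↔ R a := by
  by_cases h : R a <;> simp [hv a, h, zone_ne_empty]

theorem congr' {m : ℕ} {R R' : (Fin m → ZFSet) → Prop} (h : Rep m R) (e : ∀ a, R a ↔ R' a) :
    Rep m R' := by
  obtain ⟨χ, h1, h2⟩ := h
  refine ⟨χ, h1, fun a => ?_⟩
  rw [h2 a]
  by_cases hr : R a
  · rw [if_pos hr, if_pos ((e a).1 hr)]
  · rw [if_neg hr, if_neg fun h => hr ((e a).2 h)]

theorem mem {m : ℕ} {g1 g2 : (Fin m → ZFSet) → ZFSet}
    (h1 : PCSFminus m g1) (h2 : PCSFminus m g2) : Rep m fun a => g1 a ∈ g2 a :=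
  ⟨_, PCSFminus.condF PCSFminus.oneF PCSFminus.emptyF h1 h2, fun a => by
    by_cases h : g1 a ∈ g2 a <;> simp [h]⟩

theorem ofNe {m : ℕ} {χ0 : (Fin m → ZFSet) → ZFSet} (h0 : PCSFminus m χ0)
    {R : (Fin m → ZFSet) → Prop} (hne : ∀ a, χ0 a ≠ ∅ ↔ R a) : Rep m R := by
  have hs := PCSFminus.sepF (g := fun _ => ({∅} : ZFSet)) PCSFminus.oneF
    (χ := fun v => χ0 fun i => v (Fin.castSucc i)) (h0.subst Fin.castSucc)
    (R := fun a _ => R a)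
    (fun a b => by
      show χ0 (fun i => (Fin.snoc a b : Fin (m + 1) → ZFSet) (Fin.castSucc i)) ≠ ∅ ↔ R a
      simp only [Fin.snoc_castSucc]
      exact hne a)
  refine ⟨_, hs, fun a => ?_⟩
  by_cases h : R a
  · ext z; simp [ZFSet.mem_sep, h]
  · ext z; simp [ZFSet.mem_sep, h]

theorem comp {k m : ℕ} {R : (Fin k → ZFSet) → Prop} (h : Rep k R)
    {t : Fin k → (Fin m → ZFSet) → ZFSet} (ht : ∀ i, PCSFminus m (t i)) :
    Rep m fun a => R fun i => t i a := by
  obtain ⟨χ, p, v⟩ := h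
  exact ⟨_, PCSFminus.comp χ t p ht, fun a => v _⟩

theorem not {m : ℕ} {R : (Fin m → ZFSet) → Prop} (h : Rep m R) : Rep m fun a => ¬ R a := by
  obtain ⟨χ, h1, h2⟩ := h
  have hinner : PCSFminus (m + 1)
      (fun v => if v (Fin.last m) ∈ χ (fun i => v (Fin.castSucc i)) then (∅ : ZFSet) else {∅}) :=
    PCSFminus.condF PCSFminus.emptyF PCSFminus.oneF (PCSFminus.proj (Fin.last m))
      (h1.subst Fin.castSucc)
  have hs := PCSFminus.sepF PCSFminus.oneF hinner
    (R := fun a b => b ∉ χ a)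
    (fun a b => by
      show (if (Fin.snoc a b : Fin (m + 1) → ZFSet) (Fin.last m) ∈
          χ fun i => (Fin.snoc a b : Fin (m + 1) → ZFSet) (Fin.castSucc i)
        then (∅ : ZFSet) else {∅}) ≠ ∅ ↔ b ∉ χ a
      simp only [Fin.snoc_castSucc, Fin.snoc_last]
      by_cases hb : b ∈ χ a <;> simp [hb, zone_ne_empty])
  refine ofNe hs (fun a => ?_)
  by_cases hr : R a
  · have hsep : ZFSet.sep (fun b => b ∉ χ a) ({∅} : ZFSet) = ∅ := by
      ext z; simp [ZFSet.mem_sep, h2 a, hr]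
    simp [hsep, hr]
  · have hsep : ZFSet.sep (fun b => b ∉ χ a) ({∅} : ZFSet) = {∅} := by
      ext z; simp [ZFSet.mem_sep, h2 a, hr, ZFSet.notMem_empty]
    simp [hsep, zone_ne_empty, hr]

theorem or {m : ℕ} {R1 R2 : (Fin m → ZFSet) → Prop} (h1 : Rep m R1) (h2 : Rep m R2) :
    Rep m fun a => R1 a ∨ R2 a := by
  obtain ⟨χ1, p1, v1⟩ := h1
  obtain ⟨χ2, p2, v2⟩ := h2
  refine ofNe (PCSFminus.unionF (PCSFminus.pairF p1 p2)) (fun a => ?_)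
  rw [v1 a, v2 a]
  constructor
  · intro h
    by_contra hc
    push_neg at hc
    apply h
    rw [if_neg hc.1, if_neg hc.2]
    ext z
    simp [ZFSet.mem_sUnion, ZFSet.mem_pair, ZFSet.notMem_empty]
  · rintro (hr | hr) h <;> rw [ZFSet.eq_empty] at h
    · exact h ∅ (ZFSet.mem_sUnion.2 ⟨{∅}, ZFSet.mem_pair.2 (Or.inl (if_pos hr).symm), by simp⟩)
    · exact h ∅ (ZFSet.mem_sUnion.2 ⟨{∅}, ZFSet.mem_pair.2 (Or.inr (if_pos hr).symm), by simp⟩)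

theorem and {m : ℕ} {R1 R2 : (Fin m → ZFSet) → Prop} (h1 : Rep m R1) (h2 : Rep m R2) :
    Rep m fun a => R1 a ∧ R2 a :=
  ((h1.not.or h2.not).not).congr' (fun a => by tauto)

theorem bex {m : ℕ} {g : (Fin m → ZFSet) → ZFSet} (hg : PCSFminus m g)
    {R : (Fin (m + 1) → ZFSet) → Prop} (hR : Rep (m + 1) R) :
    Rep m fun a => ∃ b ∈ g a, R (Fin.snoc a b) := by
  obtain ⟨χ, p, v⟩ := hR
  have hs := PCSFminus.sepF hg p (R := fun a b => R (Fin.snoc a b))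
    (fun a b => ne_iff v _)
  refine ofNe hs (fun a => ?_)
  constructor
  · intro hne
    rcases ZFSet.eq_empty_or_nonempty (ZFSet.sep (fun b => R (Fin.snoc a b)) (g a)) with he | hn
    · exact absurd he hne
    · obtain ⟨y, hy⟩ := hn
      change y ∈ ZFSet.sep _ _ at hy
      rw [ZFSet.mem_sep] at hy
      exact ⟨y, hy.1, hy.2⟩
  · rintro ⟨b, hb, hr⟩ h
    rw [ZFSet.eq_empty] at h
    exact h b (ZFSet.mem_sep.2 ⟨hb, hr⟩)

theorem ball {m : ℕ} {g : (Fin m → ZFSet) → ZFSet} (hg : PCSFminus m g)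
    {R : (Fin (m + 1) → ZFSet) → Prop} (hR : Rep (m + 1) R) :
    Rep m fun a => ∀ b ∈ g a, R (Fin.snoc a b) :=
  ((bex hg hR.not).not).congr' (fun a => by push_neg; tauto)

theorem eqF {m : ℕ} {g1 g2 : (Fin m → ZFSet) → ZFSet}
    (h1 : PCSFminus m g1) (h2 : PCSFminus m g2) : Rep m fun a => g1 a = g2 a := by
  have sub : ∀ {u1 u2 : (Fin m → ZFSet) → ZFSet}, PCSFminus m u1 → PCSFminus m u2 →
      Rep m (fun a => ∀ z ∈ u1 a, z ∈ u2 a) := by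
    intro u1 u2 p1 p2
    have := ball p1 (R := fun v => v (Fin.last m) ∈ u2 fun i => v (Fin.castSucc i))
      (mem (PCSFminus.proj (Fin.last m)) (p2.subst Fin.castSucc))
    refine this.congr' (fun a => ?_)
    constructor
    · intro h z hz
      have h3 := h z hz
      simpa only [Fin.snoc_last, Fin.snoc_castSucc] using h3
    · intro h b hb
      show (Fin.snoc a b : Fin (m + 1) → ZFSet) (Fin.last m) ∈
        u2 fun i => (Fin.snoc a b : Fin (m + 1) → ZFSet) (Fin.castSucc i)
      simpa only [Fin.snoc_last, Fin.snoc_castSucc] using h b hb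
  refine ((sub h1 h2).and (sub h2 h1)).congr' (fun a => ?_)
  constructor
  · rintro ⟨ha, hb⟩
    ext z
    exact ⟨ha z, hb z⟩
  · intro h
    rw [h]
    exact ⟨fun z hz => hz, fun z hz => hz⟩

end Rep

/-- Second component of a Kuratowski pair. -/
def sndZ (p : ZFSet) : ZFSet :=
  ZFSet.sUnion (ZFSet.sep
    (fun u => ({u} : ZFSet) ∉ p ∨ ∀ v ∈ p, v = ({u} : ZFSet)) (ZFSet.sUnion p))

theorem sndZ_kpair (c d : ZFSet) : sndZ (kpair c d) = d := by
  have hS : ZFSet.sep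
      (fun u => ({u} : ZFSet) ∉ kpair c d ∨ ∀ v ∈ kpair c d, v = ({u} : ZFSet))
      (ZFSet.sUnion (kpair c d)) = ({d} : ZFSet) := by
    ext u
    simp only [ZFSet.mem_sep, ZFSet.mem_sUnion, kpair, ZFSet.mem_pair, ZFSet.mem_singleton]
    constructor
    · rintro ⟨⟨w, hw, hu⟩, hcond⟩
      have huc : u = c ∨ u = d := by
        rcases hw with rfl | rfl
        · rw [ZFSet.mem_singleton] at hu; exact Or.inl hu
        · rw [ZFSet.mem_pair] at hu; exact hu
      rcases huc with rfl | rfl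
      · -- u = c ; show c = d
        rcases hcond with h | h
        · exact absurd (Or.inl rfl) h
        · have h1 := h {u, d} (Or.inr rfl)
          have hd : d ∈ ({u, d} : ZFSet) := by simp [ZFSet.mem_pair]
          rw [h1] at hd
          exact (ZFSet.mem_singleton.1 hd).symm
      · rfl
    · rintro rfl
      refine ⟨⟨{c, u}, Or.inr rfl, by simp [ZFSet.mem_pair]⟩, ?_⟩
      by_cases hcd : c = u
      · subst hcd
        right
        rintro v (rfl | rfl)
        · rfl
        · exact zpair_self c
      · left
        rintro (h | h)
        · have : u ∈ ({c} : ZFSet) := by rw [← h]; simp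
          exact hcd (ZFSet.mem_singleton.1 this).symm
        · have : c ∈ ({u} : ZFSet) := by rw [h]; simp [ZFSet.mem_pair]
          exact hcd (ZFSet.mem_singleton.1 this)
  rw [sndZ, hS, ZFSet.sUnion_singleton]

theorem sndF : PCSFminus 1 fun a => sndZ (a 0) := by
  have hrep : Rep 2 (fun w => ({w 1} : ZFSet) ∉ w 0 ∨ ∀ v ∈ w 0, v = ({w 1} : ZFSet)) := by
    refine Rep.or ((Rep.mem (PCSFminus.singF (.proj 1)) (.proj 0)).not) ?_
    have inner : Rep 3 fun w => w 2 = ({w 1} : ZFSet) :=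
      Rep.eqF (.proj 2) (PCSFminus.singF (.proj 1))
    refine (Rep.ball (g := fun w => w 0) (.proj 0) inner).congr' (fun a => ?_)
    constructor
    · intro h v hv
      have := h v hv
      simpa [Fin.snoc] using this
    · intro h b hb
      simpa [Fin.snoc] using h b hb
  obtain ⟨χ, hχ, hv⟩ := hrep
  have hs := PCSFminus.sepF (m := 1) (PCSFminus.unionF (.proj 0)) hχ
    (R := fun a b => ({b} : ZFSet) ∉ a 0 ∨ ∀ v ∈ a 0, v = ({b} : ZFSet))
    (fun a b => by
      have := Rep.ne_iff hv (Fin.snoc a b)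
      simpa [Fin.snoc] using this)
  exact (PCSFminus.unionF hs).congr' (funext fun a => rfl)

/-- The set of second components of the (Kuratowski pair) elements of `P`. -/
def rngZ (P : ZFSet) : ZFSet :=
  ZFSet.sep (fun d => ∃ p ∈ P, d = sndZ p) (ZFSet.sUnion (ZFSet.sUnion P))

theorem rngZ_zImage (F : ZFSet → ZFSet) (x : ZFSet) :
    rngZ (zImage (fun z => kpair z (F z)) x) = zImage F x := by
  ext d
  simp only [rngZ, ZFSet.mem_sep, zImage_mem, ZFSet.mem_sUnion]
  constructor
  · rintro ⟨-, p, hp, rfl⟩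
    obtain ⟨z, hz, rfl⟩ := hp
    exact ⟨z, hz, (sndZ_kpair _ _).symm⟩
  · rintro ⟨z, hz, rfl⟩
    refine ⟨⟨{z, F z}, ⟨kpair z (F z), ⟨z, hz, rfl⟩, ?_⟩, ?_⟩,
      kpair z (F z), ⟨z, hz, rfl⟩, (sndZ_kpair z (F z)).symm⟩
    · simp [kpair, ZFSet.mem_pair]
    · simp [ZFSet.mem_pair]

theorem rngF : PCSFminus 1 fun a => rngZ (a 0) := by
  have inner : Rep 3 fun w => w 1 = sndZ (w 2) :=
    Rep.eqF (.proj 1) (sndF.subst fun _ => (2 : Fin 3))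
  have hrep : Rep 2 fun w => ∃ p ∈ w 0, w 1 = sndZ p := by
    refine (Rep.bex (g := fun w => w 0) (.proj 0) inner).congr' (fun a => ?_)
    constructor
    · rintro ⟨b, hb, h⟩
      refine ⟨b, hb, ?_⟩
      simpa [Fin.snoc] using h
    · rintro ⟨p, hp, h⟩
      refine ⟨p, hp, ?_⟩
      simpa [Fin.snoc] using h
  obtain ⟨χ, hχ, hv⟩ := hrep
  have hs := PCSFminus.sepF (m := 1) (PCSFminus.unionF (PCSFminus.unionF (.proj 0))) hχ
    (R := fun a d => ∃ p ∈ a 0, d = sndZ p)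
    (fun a b => by
      have := Rep.ne_iff hv (Fin.snoc a b)
      simpa [Fin.snoc] using this)
  exact hs.congr' (funext fun a => rfl)

theorem kpairF : PCSFminus 2 fun b => kpair (b 0) (b 1) :=
  (PCSFminus.pairF (PCSFminus.singF (.proj 0)) (PCSFminus.pairF (.proj 0) (.proj 1))).congr'
    (funext fun b => rfl)

namespace PCSF

theorem congr' {n m : ℕ} {f g : (Fin n → ZFSet) → (Fin m → ZFSet) → ZFSet}
    (h : PCSF n m f) (e : f = g) : PCSF n m g := e ▸ h

theorem projS {n m : ℕ} (i : Fin m) : PCSF n m fun _ a => a i :=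
  (proj (Fin.natAdd n i)).congr'
    (funext fun x => funext fun a => Fin.append_right x a i)

theorem projN {n m : ℕ} (j : Fin n) : PCSF n m fun x _ => x j :=
  (proj (Fin.castAdd m j)).congr'
    (funext fun x => funext fun a => Fin.append_left x a j)

theorem postcomp {n m : ℕ} {g : (Fin n → ZFSet) → (Fin m → ZFSet) → ZFSet}
    (hg : PCSF n m g) {u : (Fin 1 → ZFSet) → ZFSet} (hu : PCSFminus 1 u) :
    PCSF n m fun x a => u fun _ => g x a :=
  comp (fun _ a => u a) Fin.elim0 (fun _ => g) (.ofMinus u hu) (fun i => i.elim0) (fun _ => hg)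

end PCSF

namespace PCSFfun

theorem congr' {n m : ℕ} {f g : (Fin n → ZFSet) → (Fin m → ZFSet) → ZFSet}
    (h : PCSFfun n m f) (e : f = g) : PCSFfun n m g := e ▸ h

theorem projS {n m : ℕ} (i : Fin m) : PCSFfun n m fun _ a => a i :=
  (proj (Fin.natAdd n i)).congr'
    (funext fun x => funext fun a => Fin.append_right x a i)

theorem projN {n m : ℕ} (j : Fin n) : PCSFfun n m fun x _ => x j :=
  (proj (Fin.castAdd m j)).congr'
    (funext fun x => funext fun a => Fin.append_left x a j)

theorem postcomp {n m : ℕ} {g : (Fin n → ZFSet) → (Fin m → ZFSet) → ZFSet}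
    (hg : PCSFfun n m g) {u : (Fin 1 → ZFSet) → ZFSet} (hu : PCSFminus 1 u) :
    PCSFfun n m fun x a => u fun _ => g x a :=
  comp (fun _ a => u a) Fin.elim0 (fun _ => g) (.ofMinus u hu) (fun i => i.elim0) (fun _ => hg)

end PCSFfun

end Aux12

/-- `PCSF` is closed under predicative function recursion
`f(x,ȳ/ā) = h(x,ȳ/ā, f↾x)`; conversely, every `PCSF` function is generated
from `PCSF⁻` and projections by safe composition and predicative function
recursion. -/
theorem pcsf_function_recursion :
    (∀ (n m : ℕ) (h : (Fin (n + 1) → ZFSet) → (Fin (m + 1) → ZFSet) → ZFSet)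
        (f : (Fin (n + 1) → ZFSet) → (Fin m → ZFSet) → ZFSet),
      PCSF (n + 1) (m + 1) h →
      (∀ (x : ZFSet) (y : Fin n → ZFSet) (a : Fin m → ZFSet),
        f (Fin.cons x y) a =
          h (Fin.cons x y)
            (Fin.snoc a (zImage (fun z => kpair z (f (Fin.cons z y) a)) x))) →
      PCSF (n + 1) m f) ∧
    (∀ (n m : ℕ) (f : (Fin n → ZFSet) → (Fin m → ZFSet) → ZFSet),
      PCSF n m f → PCSFfun n m f) := by
  constructor
  · -- PCSF is closed under predicative function recursion
    intro n m h f hh heq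
    -- g(x,ȳ/ā) = ⟨x, f(x,ȳ/ā)⟩, by predicative set recursion
    have hh' : PCSF (n + 1) (m + 1) fun x a => kpair (x 0) (h x a) := by
      refine (PCSF.comp (fun _ b => kpair (b 0) (b 1)) Fin.elim0
        ![fun x _ => x 0, h] (.ofMinus _ kpairF) (fun i => i.elim0) ?_).congr' ?_
      · intro i
        fin_cases i
        · simpa using PCSF.projN (0 : Fin (n + 1))
        · simpa using hh
      · funext x a
        simp
    have hgeq : ∀ (x : ZFSet) (y : Fin n → ZFSet) (a : Fin m → ZFSet),
        (fun x a => kpair (x 0) (f x a)) (Fin.cons x y) a =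
          (fun x a => kpair (x 0) (h x a)) (Fin.cons x y)
            (Fin.snoc a (zImage (fun z =>
              (fun x a => kpair (x 0) (f x a)) (Fin.cons z y) a) x)) := by
      intro x y a
      simp only [Fin.cons_zero]
      rw [heq x y a]
    have hgP : PCSF (n + 1) m fun x a => kpair (x 0) (f x a) :=
      PCSF.recur _ _ hh' hgeq
    refine (hgP.postcomp sndF).congr' (funext fun x => funext fun a => ?_)
    exact sndZ_kpair _ _
  · -- every PCSF function is in PCSFfun
    intro n m f hf
    induction hf with
    | ofMinus h hm => exact .ofMinus h hm
    | proj j => exact .proj j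
    | comp h r t hh hr ht ihh ihr iht => exact .comp h r t ihh ihr iht
    | @recur n m h f hh heq ihh =>
      have ht : ∀ i : Fin (m + 1), PCSFfun (n + 1) (m + 1)
          ((Fin.snoc (fun (i : Fin m) (_ : Fin (n + 1) → ZFSet) (b : Fin (m + 1) → ZFSet) =>
              b i.castSucc)
            (fun _ b => rngZ (b (Fin.last m))) :
            Fin (m + 1) → (Fin (n + 1) → ZFSet) → (Fin (m + 1) → ZFSet) → ZFSet) i) := by
        intro i
        induction i using Fin.lastCases with
        | last =>
          rw [Fin.snoc_last]
          exact (PCSFfun.projS (Fin.last m)).postcomp rngF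
        | cast j =>
          rw [Fin.snoc_castSucc]
          exact PCSFfun.projS j.castSucc
      have hcomp := PCSFfun.comp h (fun j x _ => x j) _ ihh (fun j => PCSFfun.projN j) ht
      refine PCSFfun.frecur _ f (hcomp.congr' rfl) ?_
      intro x y a
      show f (Fin.cons x y) a = h _ fun i =>
        (Fin.snoc (fun (i : Fin m) (_ : Fin (n + 1) → ZFSet) (b : Fin (m + 1) → ZFSet) =>
            b i.castSucc)
          (fun _ b => rngZ (b (Fin.last m))) :
          Fin (m + 1) → (Fin (n + 1) → ZFSet) → (Fin (m + 1) → ZFSet) → ZFSet) i (Fin.cons x y)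
          (Fin.snoc a (zImage (fun z => kpair z (f (Fin.cons z y) a)) x))
      have harg : (fun i =>
          (Fin.snoc (fun (i : Fin m) (_ : Fin (n + 1) → ZFSet) (b : Fin (m + 1) → ZFSet) =>
              b i.castSucc)
            (fun _ b => rngZ (b (Fin.last m))) :
            Fin (m + 1) → (Fin (n + 1) → ZFSet) → (Fin (m + 1) → ZFSet) → ZFSet) i (Fin.cons x y)
            (Fin.snoc a (zImage (fun z => kpair z (f (Fin.cons z y) a)) x))) =
          (Fin.snoc a (zImage (fun z => f (Fin.cons z y) a) x) : Fin (m + 1) → ZFSet) := by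
        funext i
        induction i using Fin.lastCases with
        | last =>
          simp only [Fin.snoc_last]
          exact rngZ_zImage (fun z => f (Fin.cons z y) a) x
        | cast j =>
          simp only [Fin.snoc_castSucc]
      rw [harg]
      exact heq x y a

end PCSFPaper
end
end

section
/- For each function f in PCSF (with n normal and m safe arguments) there exists a polynomial p_f in n variables such that for all hereditarily finite sets X̄=X₁,…,Xₙ and Ā=A₁,…,Aₘ: cT(f(X̄/Ā)) ≤ p_f(cT(X₁),…,cT(Xₙ)) + cT(A₁∪⋯∪Aₘ), where cT(X) denotes the cardinality of the transitive closure of X. (In particular the safe arguments contribute only linearly and are never duplicated.) -/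
open scoped Classical

noncomputable section

namespace PCSFPaper

/-! ## Auxiliary lemmas for the proof -/

section Aux

theorem _root_.ZFSet.mem_toSet {x z : ZFSet} : z ∈ x.toSet ↔ z ∈ x := Iff.rfl

theorem _root_.ZFSet.toSet_subset_iff {x y : ZFSet} : x.toSet ⊆ y.toSet ↔ x ⊆ y :=
  ZFSet.coe_subset_coe

theorem _root_.ZFSet.toSet_empty : (∅ : ZFSet).toSet = ∅ := ZFSet.coe_empty

theorem mem_zImage {f : ZFSet → ZFSet} {x z : ZFSet} :
    z ∈ zImage f x ↔ ∃ y ∈ x, f y = z :=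
  @ZFSet.mem_image f (Classical.allZFSetDefinable fun s => f (s 0)) x z

theorem toSet_zImage (f : ZFSet → ZFSet) (x : ZFSet) :
    (zImage f x).toSet = f '' x.toSet := by
  ext z
  simp only [ZFSet.mem_toSet, mem_zImage, Set.mem_image]

theorem zImage_congr {f g : ZFSet → ZFSet} {x : ZFSet} (h : ∀ y ∈ x, f y = g y) :
    zImage f x = zImage g x := by
  apply ZFSet.ext
  intro z
  simp only [mem_zImage]
  constructor
  · rintro ⟨y, hy, rfl⟩; exact ⟨y, hy, (h y hy).symm⟩
  · rintro ⟨y, hy, rfl⟩; exact ⟨y, hy, h y hy⟩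

theorem TCset_def (x : ZFSet) :
    TCset x = x ∪ ZFSet.sUnion (zImage TCset x) := by
  rw [TCset, WellFounded.fix_eq]
  congr 1
  congr 1
  exact zImage_congr fun y hy => by simp [hy, TCset]

theorem mem_TCset {x z : ZFSet} :
    z ∈ TCset x ↔ z ∈ x ∨ ∃ y ∈ x, z ∈ TCset y := by
  rw [TCset_def, ZFSet.mem_union]
  simp only [ZFSet.mem_sUnion, mem_zImage]
  constructor
  · rintro (h | ⟨t, ⟨y, hy, rfl⟩, hz⟩)
    · exact Or.inl h
    · exact Or.inr ⟨y, hy, hz⟩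
  · rintro (h | ⟨y, hy, hz⟩)
    · exact Or.inl h
    · exact Or.inr ⟨TCset y, ⟨y, hy, rfl⟩, hz⟩

theorem mem_TCset_of_mem {x z : ZFSet} (h : z ∈ x) : z ∈ TCset x :=
  mem_TCset.2 (Or.inl h)

theorem TCset_subset_of_mem {x y : ZFSet} (h : y ∈ x) : TCset y ⊆ TCset x :=
  fun _ hz => mem_TCset.2 (Or.inr ⟨y, h, hz⟩)

theorem TCset_subset_of_mem_TCset {x w : ZFSet} (h : w ∈ TCset x) :
    TCset w ⊆ TCset x := by
  induction x using ZFSet.inductionOn with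
  | _ x ih =>
    rcases mem_TCset.1 h with h' | ⟨y, hy, hw⟩
    · exact TCset_subset_of_mem h'
    · exact (ih y hy hw).trans (TCset_subset_of_mem hy)

theorem TCset_mono {x y : ZFSet} (h : x ⊆ y) : TCset x ⊆ TCset y := by
  intro z hz
  rcases mem_TCset.1 hz with h' | ⟨w, hw, hz'⟩
  · exact mem_TCset_of_mem (h h')
  · exact TCset_subset_of_mem (h hw) hz'

theorem TCset_empty : TCset (∅ : ZFSet) = ∅ := by
  apply ZFSet.ext; intro z
  rw [mem_TCset]
  simp

theorem TCset_union (x y : ZFSet) : TCset (x ∪ y) = TCset x ∪ TCset y := by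
  apply ZFSet.ext; intro z
  simp only [ZFSet.mem_union]
  constructor
  · intro hz
    rcases mem_TCset.1 hz with h | ⟨w, hw, hz'⟩
    · rcases ZFSet.mem_union.1 h with h | h
      · exact Or.inl (mem_TCset_of_mem h)
      · exact Or.inr (mem_TCset_of_mem h)
    · rcases ZFSet.mem_union.1 hw with h | h
      · exact Or.inl (TCset_subset_of_mem h hz')
      · exact Or.inr (TCset_subset_of_mem h hz')
  · rintro (h | h)
    · exact TCset_mono (fun w hw => ZFSet.mem_union.2 (Or.inl hw)) h
    · exact TCset_mono (fun w hw => ZFSet.mem_union.2 (Or.inr hw)) h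

theorem TCset_sUnion_subset (x : ZFSet) : TCset (ZFSet.sUnion x) ⊆ TCset x := by
  intro z hz
  rcases mem_TCset.1 hz with h | ⟨w, hw, hz'⟩
  · rcases ZFSet.mem_sUnion.1 h with ⟨t, ht, hzt⟩
    exact TCset_subset_of_mem ht (mem_TCset_of_mem hzt)
  · rcases ZFSet.mem_sUnion.1 hw with ⟨t, ht, hwt⟩
    exact TCset_subset_of_mem ht (TCset_subset_of_mem hwt hz')

theorem TCset_pair_subset (a b : ZFSet) :
    TCset ({a, b} : ZFSet) ⊆ insert a (insert b (TCset a ∪ TCset b)) := by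
  intro z hz
  rcases mem_TCset.1 hz with h | ⟨w, hw, hz'⟩
  · rcases ZFSet.mem_pair.1 h with rfl | rfl
    · exact ZFSet.mem_insert _ _
    · exact ZFSet.mem_insert_iff.2 (Or.inr (ZFSet.mem_insert _ _))
  · rcases ZFSet.mem_pair.1 hw with rfl | rfl
    · exact ZFSet.mem_insert_iff.2 (Or.inr (ZFSet.mem_insert_iff.2
        (Or.inr (ZFSet.mem_union.2 (Or.inl hz')))))
    · exact ZFSet.mem_insert_iff.2 (Or.inr (ZFSet.mem_insert_iff.2
        (Or.inr (ZFSet.mem_union.2 (Or.inr hz')))))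

/-! ### unionFin -/

theorem mem_foldr_union {l : List ZFSet} {z : ZFSet} :
    z ∈ l.foldr (· ∪ ·) ∅ ↔ ∃ t ∈ l, z ∈ t := by
  induction l with
  | nil => simp [ZFSet.notMem_empty]
  | cons a l ih => simp [ZFSet.mem_union, ih]

theorem mem_unionFin {m : ℕ} {A : Fin m → ZFSet} {z : ZFSet} :
    z ∈ unionFin A ↔ ∃ j, z ∈ A j := by
  rw [unionFin, mem_foldr_union]
  constructor
  · rintro ⟨t, ht, hz⟩
    rcases (List.mem_ofFn (f := A) (a := t)).1 ht with ⟨j, rfl⟩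
    exact ⟨j, hz⟩
  · rintro ⟨j, hz⟩
    exact ⟨A j, (List.mem_ofFn (f := A) (a := A j)).2 ⟨j, rfl⟩, hz⟩

theorem subset_unionFin {m : ℕ} (A : Fin m → ZFSet) (j : Fin m) :
    A j ⊆ unionFin A := fun z hz => mem_unionFin.2 ⟨j, hz⟩

theorem unionFin_elim0 : unionFin Fin.elim0 = (∅ : ZFSet) := rfl

theorem unionFin_snoc {m : ℕ} (A : Fin m → ZFSet) (b : ZFSet) :
    unionFin (Fin.snoc A b) = unionFin A ∪ b := by
  apply ZFSet.ext; intro z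
  simp only [mem_unionFin, ZFSet.mem_union]
  constructor
  · rintro ⟨j, hz⟩
    rcases Fin.eq_castSucc_or_eq_last j with ⟨i, rfl⟩ | rfl
    · rw [Fin.snoc_castSucc] at hz
      exact Or.inl ⟨i, hz⟩
    · rw [Fin.snoc_last] at hz
      exact Or.inr hz
  · rintro (⟨j, hz⟩ | hz)
    · exact ⟨j.castSucc, by rwa [Fin.snoc_castSucc]⟩
    · exact ⟨Fin.last m, by rwa [Fin.snoc_last]⟩

theorem mem_TCset_unionFin {m : ℕ} {A : Fin m → ZFSet} {z : ZFSet} :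
    z ∈ TCset (unionFin A) ↔ ∃ j, z ∈ TCset (A j) := by
  constructor
  · intro hz
    rcases mem_TCset.1 hz with h | ⟨w, hw, hz'⟩
    · rcases mem_unionFin.1 h with ⟨j, hj⟩
      exact ⟨j, mem_TCset_of_mem hj⟩
    · rcases mem_unionFin.1 hw with ⟨j, hj⟩
      exact ⟨j, TCset_subset_of_mem hj hz'⟩
  · rintro ⟨j, hz⟩
    exact TCset_mono (subset_unionFin A j) hz

/-! ### IsHF and cT -/

theorem isHF_of_TCset_subset {x y : ZFSet} (h : TCset x ⊆ TCset y) (hy : IsHF y) :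
    IsHF x := hy.subset (ZFSet.toSet_subset_iff.2 h)

theorem toSet_subset_TCset (x : ZFSet) : x.toSet ⊆ (TCset x).toSet :=
  fun _ hz => mem_TCset_of_mem hz

theorem finite_toSet_of_isHF {x : ZFSet} (h : IsHF x) : x.toSet.Finite :=
  h.subset (toSet_subset_TCset x)

theorem isHF_mem {x y : ZFSet} (hx : IsHF x) (h : y ∈ x) : IsHF y :=
  isHF_of_TCset_subset (TCset_subset_of_mem h) hx

theorem isHF_mem_TCset {x w : ZFSet} (hx : IsHF x) (h : w ∈ (TCset x).toSet) : IsHF w :=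
  isHF_of_TCset_subset (TCset_subset_of_mem_TCset h) hx

theorem cT_le_of_TCset_subset {x y : ZFSet} (h : TCset x ⊆ TCset y) (hy : IsHF y) :
    cT x ≤ cT y :=
  Set.ncard_le_ncard (ZFSet.toSet_subset_iff.2 h) hy

theorem cT_le_of_mem_TCset {x w : ZFSet} (hx : IsHF x) (h : w ∈ (TCset x).toSet) :
    cT w ≤ cT x :=
  cT_le_of_TCset_subset (TCset_subset_of_mem_TCset h) hx

theorem isHF_unionFin {m : ℕ} {A : Fin m → ZFSet} (hA : ∀ j, IsHF (A j)) :
    IsHF (unionFin A) := by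
  have : (TCset (unionFin A)).toSet = ⋃ j, (TCset (A j)).toSet := by
    ext z
    simp only [ZFSet.mem_toSet, Set.mem_iUnion, mem_TCset_unionFin]
  rw [IsHF, this]
  exact Set.finite_iUnion fun j => hA j

/-! ### Cardinality helpers -/

theorem ncard_diff_le_of_subset_union {S A T : Set ZFSet} (h : S ⊆ A ∪ T)
    (hA : A.Finite) : (S \ T).ncard ≤ A.ncard := by
  refine Set.ncard_le_ncard ?_ hA
  rintro z ⟨hzS, hzT⟩
  exact (h hzS).resolve_right hzT

theorem ncard_finset_biUnion_le {ι : Type} (s : Finset ι) (B : ι → Set ZFSet) :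
    (⋃ i ∈ s, B i).ncard ≤ ∑ i ∈ s, (B i).ncard := by
  classical
  induction s using Finset.induction with
  | empty => simp
  | insert a s' hns ih =>
    rw [Finset.sum_insert hns]
    refine le_trans (le_of_eq ?_) (le_trans (Set.ncard_union_le _ _)
      (Nat.add_le_add_left ih _))
    congr 1
    ext z
    simp

theorem ncard_biUnion_le_mul {S : Set ZFSet} (hS : S.Finite) (B : ZFSet → Set ZFSet)
    (K : ℕ) : (∀ w ∈ S, (B w).ncard ≤ K) → (⋃ w ∈ S, B w).ncard ≤ S.ncard * K := by
  refine Set.Finite.induction_on (motive := fun s _ => (∀ w ∈ s, (B w).ncard ≤ K) →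
      (⋃ w ∈ s, B w).ncard ≤ s.ncard * K) S hS (fun _ => by simp) ?_
  intro a s ha hs ih hB
  rw [Set.biUnion_insert, Set.ncard_insert_of_notMem ha hs]
  refine le_trans (Set.ncard_union_le _ _) ?_
  calc (B a).ncard + (⋃ w ∈ s, B w).ncard ≤ K + s.ncard * K :=
      add_le_add (hB a (Set.mem_insert _ _))
        (ih fun w hw => hB w (Set.mem_insert_of_mem _ hw))
    _ = (s.ncard + 1) * K := by ring

/-! ### Polynomial helpers -/

theorem eval_mono {σ : Type} (p : MvPolynomial σ ℕ) {v w : σ → ℕ}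
    (h : ∀ i, v i ≤ w i) : MvPolynomial.eval v p ≤ MvPolynomial.eval w p := by
  induction p using MvPolynomial.induction_on with
  | C a => simp
  | add p q hp hq => simpa using add_le_add hp hq
  | mul_X p i hp =>
    simp only [map_mul, MvPolynomial.eval_X]
    exact Nat.mul_le_mul hp (h i)

theorem eval_bind₁_nat {σ τ : Type} (v : τ → ℕ) (g : σ → MvPolynomial τ ℕ)
    (p : MvPolynomial σ ℕ) :
    MvPolynomial.eval v (MvPolynomial.bind₁ g p) =
      MvPolynomial.eval (fun i => MvPolynomial.eval v (g i)) p := by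
  simpa using MvPolynomial.eval₂Hom_bind₁ (RingHom.id ℕ) v g p

theorem TCset_zImage_subset (g : ZFSet → ZFSet) (x : ZFSet) :
    (TCset (zImage g x)).toSet ⊆
      (zImage g x).toSet ∪ ⋃ z ∈ x.toSet, (TCset (g z)).toSet := by
  intro w hw
  rcases mem_TCset.1 hw with h1 | ⟨u, hu, hw'⟩
  · exact Or.inl h1
  · rcases mem_zImage.1 hu with ⟨z, hz, rfl⟩
    exact Or.inr (Set.mem_iUnion₂.2 ⟨z, hz, hw'⟩)

theorem isHF_zImage {g : ZFSet → ZFSet} {x : ZFSet} (hx : IsHF x)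
    (hg : ∀ z ∈ x, IsHF (g z)) : IsHF (zImage g x) := by
  refine Set.Finite.subset (Set.Finite.union ?_ ?_) (TCset_zImage_subset g x)
  · rw [toSet_zImage]
    exact (finite_toSet_of_isHF hx).image g
  · exact (finite_toSet_of_isHF hx).biUnion fun z hz => hg z hz

/-! ### The main size bound, by induction on PCSF -/

theorem minus_bound {m : ℕ} {h : (Fin m → ZFSet) → ZFSet} (hh : PCSFminus m h) :
    ∃ c : ℕ, ∀ a : Fin m → ZFSet, (∀ j, IsHF (a j)) →
      IsHF (h a) ∧
      ((TCset (h a)).toSet \ (TCset (unionFin a)).toSet).ncard ≤ c := by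
  induction hh with
  | proj j =>
    refine ⟨0, fun a ha => ⟨ha j, ?_⟩⟩
    have hsub : TCset (a j) ⊆ TCset (unionFin a) := TCset_mono (subset_unionFin a j)
    rw [Set.diff_eq_empty.2 (ZFSet.toSet_subset_iff.2 hsub)]
    simp
  | pair =>
    refine ⟨2, fun a ha => ?_⟩
    have hsub : (TCset ({a 0, a 1} : ZFSet)).toSet ⊆
        insert (a 0) (insert (a 1)
          ((TCset (unionFin a)).toSet ∪ (TCset (unionFin a)).toSet)) := by
      intro z hz
      have := TCset_pair_subset (a 0) (a 1) hz
      rcases ZFSet.mem_insert_iff.1 this with rfl | h2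
      · exact Set.mem_insert _ _
      rcases ZFSet.mem_insert_iff.1 h2 with rfl | h3
      · exact Set.mem_insert_of_mem _ (Set.mem_insert _ _)
      refine Set.mem_insert_of_mem _ (Set.mem_insert_of_mem _ ?_)
      rcases ZFSet.mem_union.1 h3 with h4 | h4
      · exact Or.inl (TCset_mono (subset_unionFin a 0) h4)
      · exact Or.inr (TCset_mono (subset_unionFin a 1) h4)
    constructor
    · refine Set.Finite.subset ?_ hsub
      exact (((isHF_unionFin ha).union (isHF_unionFin ha)).insert _).insert _
    · have : (TCset ({a 0, a 1} : ZFSet)).toSet \ (TCset (unionFin a)).toSet ⊆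
          {a 0, a 1} := by
        rintro z ⟨hz1, hz2⟩
        rcases hsub hz1 with rfl | hz3
        · exact Set.mem_insert _ _
        rcases hz3 with rfl | hz4
        · exact Set.mem_insert_of_mem _ rfl
        · rcases hz4 with h4 | h4 <;> exact absurd h4 hz2
      refine le_trans (Set.ncard_le_ncard this (Set.toFinite _)) ?_
      exact le_trans (Set.ncard_insert_le _ _) (by simp)
  | null =>
    refine ⟨0, fun a _ => ?_⟩
    constructor
    · show (TCset ∅).toSet.Finite
      rw [TCset_empty, ZFSet.toSet_empty]
      exact Set.finite_empty
    · show ((TCset ∅).toSet \ _).ncard ≤ 0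
      rw [TCset_empty, ZFSet.toSet_empty]
      simp
  | union =>
    refine ⟨0, fun a ha => ?_⟩
    have hsub : TCset (ZFSet.sUnion (a 0)) ⊆ TCset (unionFin a) :=
      (TCset_sUnion_subset (a 0)).trans (TCset_mono (subset_unionFin a 0))
    refine ⟨isHF_of_TCset_subset hsub (isHF_unionFin ha), ?_⟩
    rw [Set.diff_eq_empty.2 (ZFSet.toSet_subset_iff.2 hsub)]
    simp
  | cond =>
    refine ⟨0, fun a ha => ?_⟩
    have key : ∀ j : Fin 4, IsHF (a j) ∧
        ((TCset (a j)).toSet \ (TCset (unionFin a)).toSet).ncard ≤ 0 := by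
      intro j
      refine ⟨ha j, ?_⟩
      have hsub : TCset (a j) ⊆ TCset (unionFin a) := TCset_mono (subset_unionFin a j)
      rw [Set.diff_eq_empty.2 (ZFSet.toSet_subset_iff.2 hsub)]
      simp
    by_cases hc : a 2 ∈ a 3
    · simpa [hc] using key 0
    · simpa [hc] using key 1
  | comp h t hhh htt ihh iht =>
    obtain ⟨ch, hch⟩ := ihh
    choose c hc using iht
    refine ⟨ch + ∑ i, c i, fun a ha => ?_⟩
    have hta : ∀ i, IsHF (t i a) := fun i => (hc i a ha).1
    have hmain := hch (fun i => t i a) hta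
    refine ⟨hmain.1, ?_⟩
    set T : Set ZFSet := (TCset (unionFin a)).toSet
    have hAfin : ((TCset (h fun i => t i a)).toSet \
          (TCset (unionFin fun i => t i a)).toSet).Finite :=
      hmain.1.sdiff
    have hBfin : (⋃ i, ((TCset (t i a)).toSet \ T)).Finite :=
      Set.finite_iUnion fun i => (hta i).sdiff
    have hsub : (TCset (h fun i => t i a)).toSet ⊆
        (((TCset (h fun i => t i a)).toSet \
            (TCset (unionFin fun i => t i a)).toSet) ∪
          ⋃ i, ((TCset (t i a)).toSet \ T)) ∪ T := by
      intro z hz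
      by_cases h1 : z ∈ (TCset (unionFin fun i => t i a)).toSet
      · rcases mem_TCset_unionFin.1 h1 with ⟨j, hj⟩
        by_cases h2 : z ∈ T
        · exact Or.inr h2
        · exact Or.inl (Or.inr (Set.mem_iUnion.2 ⟨j, hj, h2⟩))
      · exact Or.inl (Or.inl ⟨hz, h1⟩)
    refine le_trans (ncard_diff_le_of_subset_union hsub (hAfin.union hBfin)) ?_
    refine le_trans (Set.ncard_union_le _ _) ?_
    refine add_le_add hmain.2 ?_
    have : (⋃ i, ((TCset (t i a)).toSet \ T)) =
        ⋃ i ∈ (Finset.univ : Finset (Fin _)), ((TCset (t i a)).toSet \ T) := by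
      simp
    rw [this]
    refine le_trans (ncard_finset_biUnion_le _ _) ?_
    exact Finset.sum_le_sum fun i _ => (hc i a ha).2
  | sep h hhh ihh =>
    refine ⟨0, fun a ha => ?_⟩
    have hsub1 : (ZFSet.sep (fun b => h (Fin.snoc (Fin.init a) b) ≠ ∅)
        (a (Fin.last _))) ⊆ a (Fin.last _) := fun z hz => (ZFSet.mem_sep.1 hz).1
    have hsub : TCset (ZFSet.sep (fun b => h (Fin.snoc (Fin.init a) b) ≠ ∅)
        (a (Fin.last _))) ⊆ TCset (unionFin a) :=
      (TCset_mono hsub1).trans (TCset_mono (subset_unionFin a (Fin.last _)))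
    refine ⟨isHF_of_TCset_subset hsub (isHF_unionFin ha), ?_⟩
    rw [Set.diff_eq_empty.2 (ZFSet.toSet_subset_iff.2 hsub)]
    simp

theorem pcsf_bound {n m : ℕ} {f : (Fin n → ZFSet) → (Fin m → ZFSet) → ZFSet}
    (hf : PCSF n m f) :
    ∃ p : MvPolynomial (Fin n) ℕ, ∀ (X : Fin n → ZFSet) (A : Fin m → ZFSet),
      (∀ i, IsHF (X i)) → (∀ j, IsHF (A j)) →
      IsHF (f X A) ∧
      ((TCset (f X A)).toSet \ (TCset (unionFin A)).toSet).ncard ≤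
        MvPolynomial.eval (fun i => cT (X i)) p := by
  induction hf with
  | ofMinus h hh =>
    obtain ⟨c, hc⟩ := minus_bound hh
    refine ⟨MvPolynomial.C c, fun X A hX hA => ?_⟩
    obtain ⟨h1, h2⟩ := hc A hA
    exact ⟨h1, by simpa using h2⟩
  | proj j =>
    rename_i n' m'
    refine Fin.addCases (motive := fun j => ∃ p : MvPolynomial (Fin n') ℕ,
      ∀ (X : Fin n' → ZFSet) (A : Fin m' → ZFSet),
        (∀ i, IsHF (X i)) → (∀ j, IsHF (A j)) →
        IsHF (Fin.append X A j) ∧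
        ((TCset (Fin.append X A j)).toSet \ (TCset (unionFin A)).toSet).ncard ≤
          MvPolynomial.eval (fun i => cT (X i)) p) ?_ ?_ j
    · intro i
      refine ⟨MvPolynomial.X i, fun X A hX hA => ?_⟩
      rw [Fin.append_left]
      refine ⟨hX i, ?_⟩
      rw [MvPolynomial.eval_X]
      exact Set.ncard_le_ncard Set.diff_subset (hX i)
    · intro i
      refine ⟨0, fun X A hX hA => ?_⟩
      rw [Fin.append_right]
      have hsub : TCset (A i) ⊆ TCset (unionFin A) := TCset_mono (subset_unionFin A i)
      refine ⟨isHF_of_TCset_subset hsub (isHF_unionFin hA), ?_⟩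
      rw [Set.diff_eq_empty.2 (ZFSet.toSet_subset_iff.2 hsub)]
      simp
  | comp h r t hhh hrr htt ihh ihr iht =>
    obtain ⟨ph, hph⟩ := ihh
    choose pr hpr using ihr
    choose pt hpt using iht
    refine ⟨MvPolynomial.bind₁ pr ph + ∑ i, pt i, fun X A hX hA => ?_⟩
    dsimp only
    have h0 : ∀ j : Fin 0, IsHF (Fin.elim0 j) := fun j => j.elim0
    have hrX : ∀ i, IsHF (r i X Fin.elim0) := fun i => (hpr i X Fin.elim0 hX h0).1
    have hrB : ∀ i, cT (r i X Fin.elim0) ≤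
        MvPolynomial.eval (fun i => cT (X i)) (pr i) := by
      intro i
      have h2 := (hpr i X Fin.elim0 hX h0).2
      rwa [unionFin_elim0, TCset_empty, ZFSet.toSet_empty, Set.diff_empty] at h2
    have htX : ∀ i, IsHF (t i X A) := fun i => (hpt i X A hX hA).1
    have hmain := hph (fun i => r i X Fin.elim0) (fun i => t i X A) hrX htX
    refine ⟨hmain.1, ?_⟩
    have hAfin : ((TCset (h (fun i => r i X Fin.elim0) fun i => t i X A)).toSet \
          (TCset (unionFin fun i => t i X A)).toSet).Finite := hmain.1.sdiff
    have hBfin : (⋃ i, ((TCset (t i X A)).toSet \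
          (TCset (unionFin A)).toSet)).Finite :=
      Set.finite_iUnion fun i => (htX i).sdiff
    have hsub : (TCset (h (fun i => r i X Fin.elim0) fun i => t i X A)).toSet ⊆
        (((TCset (h (fun i => r i X Fin.elim0) fun i => t i X A)).toSet \
            (TCset (unionFin fun i => t i X A)).toSet) ∪
          ⋃ i, ((TCset (t i X A)).toSet \ (TCset (unionFin A)).toSet)) ∪
          (TCset (unionFin A)).toSet := by
      intro z hz
      by_cases h1 : z ∈ (TCset (unionFin fun i => t i X A)).toSet
      · rcases mem_TCset_unionFin.1 h1 with ⟨j, hj⟩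
        by_cases h2 : z ∈ (TCset (unionFin A)).toSet
        · exact Or.inr h2
        · exact Or.inl (Or.inr (Set.mem_iUnion.2 ⟨j, hj, h2⟩))
      · exact Or.inl (Or.inl ⟨hz, h1⟩)
    refine le_trans (ncard_diff_le_of_subset_union hsub (hAfin.union hBfin)) ?_
    refine le_trans (Set.ncard_union_le _ _) ?_
    rw [map_add]
    refine add_le_add ?_ ?_
    · refine le_trans hmain.2 ?_
      rw [eval_bind₁_nat]
      exact eval_mono ph fun i => hrB i
    · have heq2 : (⋃ i, ((TCset (t i X A)).toSet \ (TCset (unionFin A)).toSet)) =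
          ⋃ i ∈ (Finset.univ : Finset (Fin _)),
            ((TCset (t i X A)).toSet \ (TCset (unionFin A)).toSet) := by
        simp
      rw [heq2, map_sum]
      refine le_trans (ncard_finset_biUnion_le _ _) ?_
      exact Finset.sum_le_sum fun i _ => (hpt i X A hX hA).2
  | recur h f hhh heq ihh =>
    rename_i n' m'
    obtain ⟨ph, hph⟩ := ihh
    refine ⟨(MvPolynomial.X 0 + 1) * (ph + MvPolynomial.X 0), fun X A hX hA => ?_⟩
    set y : Fin n' → ZFSet := Fin.tail X with hydef
    have hyHF : ∀ i, IsHF (y i) := fun i => hX i.succ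
    have hx0 : IsHF (X 0) := hX 0
    set J : ZFSet → ZFSet := fun w => zImage (fun z => f (Fin.cons z y) A) w with hJdef
    -- HF preservation along ∈
    have hfHF : ∀ x : ZFSet, IsHF x → IsHF (f (Fin.cons x y) A) := by
      intro x
      induction x using ZFSet.inductionOn with
      | _ x ihx =>
        intro hx
        rw [heq]
        refine (hph (Fin.cons x y) (Fin.snoc A (J x)) ?_ ?_).1
        · intro i
          refine Fin.cases (motive := fun i =>
            IsHF ((Fin.cons x y : Fin (n' + 1) → ZFSet) i)) ?_ (fun i' => ?_) i
          · simpa using hx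
          · simpa using hyHF i'
        · intro j
          refine Fin.lastCases ?_ (fun i => ?_) j
          · rw [Fin.snoc_last]
            exact isHF_zImage hx fun z hz => ihx z hz (isHF_mem hx hz)
          · rw [Fin.snoc_castSucc]
            exact hA i
    -- safe-argument tuples are HF
    have hargs1 : ∀ w : ZFSet, IsHF w →
        ∀ i, IsHF ((Fin.cons w y : Fin (n' + 1) → ZFSet) i) := by
      intro w hw i
      refine Fin.cases (motive := fun i =>
        IsHF ((Fin.cons w y : Fin (n' + 1) → ZFSet) i)) ?_ (fun i' => ?_) i
      · simpa using hw
      · simpa using hyHF i'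
    have hargs2 : ∀ w : ZFSet, IsHF w →
        ∀ j, IsHF ((Fin.snoc A (J w) : Fin (m' + 1) → ZFSet) j) := by
      intro w hw j
      refine Fin.lastCases ?_ (fun i => ?_) j
      · rw [Fin.snoc_last]
        exact isHF_zImage hw fun z hz => hfHF z (isHF_mem hw hz)
      · rw [Fin.snoc_castSucc]
        exact hA i
    -- the inclusion claim, by ∈-induction
    have hincl : ∀ x : ZFSet,
        (TCset (f (Fin.cons x y) A)).toSet ⊆
          (TCset (unionFin A)).toSet ∪
          ⋃ w ∈ insert x (TCset x).toSet,
            (((TCset (h (Fin.cons w y) (Fin.snoc A (J w)))).toSet \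
                (TCset (unionFin (Fin.snoc A (J w)))).toSet) ∪ (J w).toSet) := by
      intro x
      induction x using ZFSet.inductionOn with
      | _ x ihx =>
        intro z hz
        rw [heq] at hz
        by_cases h1 : z ∈ (TCset (unionFin (Fin.snoc A (J x)))).toSet
        · have h1' : z ∈ TCset (unionFin A) ∪ TCset (J x) := by
            rw [← TCset_union, ← unionFin_snoc]
            exact h1
          rcases ZFSet.mem_union.1 h1' with h2 | h2
          · exact Or.inl h2
          · rcases mem_TCset.1 h2 with h3 | ⟨u, hu, hz'⟩
            · exact Or.inr (Set.mem_iUnion₂.2 ⟨x, Set.mem_insert _ _, Or.inr h3⟩)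
            · rcases mem_zImage.1 hu with ⟨z', hz'x, rfl⟩
              rcases ihx z' hz'x hz' with h4 | h4
              · exact Or.inl h4
              · rcases Set.mem_iUnion₂.1 h4 with ⟨w, hw, hzw⟩
                refine Or.inr (Set.mem_iUnion₂.2 ⟨w, ?_, hzw⟩)
                rcases hw with rfl | hw'
                · exact Set.mem_insert_of_mem _ (mem_TCset_of_mem hz'x)
                · exact Set.mem_insert_of_mem _ (TCset_subset_of_mem hz'x hw')
        · exact Or.inr (Set.mem_iUnion₂.2 ⟨x, Set.mem_insert _ _, Or.inl ⟨hz, h1⟩⟩)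
    -- notation for the numeric part
    set B : ℕ := MvPolynomial.eval (fun i => cT (X i)) ph with hBdef
    have hXfun : ∀ i, (Fin.cons (X 0) y : Fin (n' + 1) → ZFSet) i = X i := fun i =>
      congrFun (Fin.cons_self_tail X) i
    -- per-node bounds
    have hnode : ∀ w ∈ insert (X 0) (TCset (X 0)).toSet,
        (((TCset (h (Fin.cons w y) (Fin.snoc A (J w)))).toSet \
            (TCset (unionFin (Fin.snoc A (J w)))).toSet) ∪ (J w).toSet).ncard ≤
          B + cT (X 0) ∧
        (((TCset (h (Fin.cons w y) (Fin.snoc A (J w)))).toSet \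
            (TCset (unionFin (Fin.snoc A (J w)))).toSet) ∪ (J w).toSet).Finite := by
      intro w hw
      have hwHF : IsHF w := by
        rcases hw with rfl | hw'
        · exact hx0
        · exact isHF_mem_TCset hx0 hw'
      have hcTw : cT w ≤ cT (X 0) := by
        rcases hw with rfl | hw'
        · exact le_rfl
        · exact cT_le_of_mem_TCset hx0 hw'
      have hmain := hph (Fin.cons w y) (Fin.snoc A (J w)) (hargs1 w hwHF) (hargs2 w hwHF)
      have hJfin : (J w).toSet.Finite := by
        rw [hJdef, toSet_zImage]
        exact (finite_toSet_of_isHF hwHF).image _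
      constructor
      · refine le_trans (Set.ncard_union_le _ _) (add_le_add ?_ ?_)
        · refine le_trans hmain.2 ?_
          rw [hBdef]
          refine eval_mono ph fun i => ?_
          refine Fin.cases (motive := fun i =>
            cT ((Fin.cons w y : Fin (n' + 1) → ZFSet) i) ≤ cT (X i)) ?_ (fun i' => ?_) i
          · simpa using hcTw.trans (le_of_eq (congrArg cT (hXfun 0)))
          · simp only [Fin.cons_succ]
            exact le_of_eq (congrArg cT (hXfun i'.succ))
        · have h5 : (J w).toSet.ncard ≤ w.toSet.ncard := by
            rw [hJdef, toSet_zImage]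
            exact Set.ncard_image_le (finite_toSet_of_isHF hwHF)
          refine le_trans h5 (le_trans ?_ hcTw)
          exact Set.ncard_le_ncard (toSet_subset_TCset w) hwHF
      · exact ((hmain.1.sdiff).union hJfin)
    -- assemble
    have hUfin : (⋃ w ∈ insert (X 0) (TCset (X 0)).toSet,
        (((TCset (h (Fin.cons w y) (Fin.snoc A (J w)))).toSet \
            (TCset (unionFin (Fin.snoc A (J w)))).toSet) ∪ (J w).toSet)).Finite :=
      ((hx0 : (TCset (X 0)).toSet.Finite).insert _).biUnion fun w hw => (hnode w hw).2
    have hfix : f X A = f (Fin.cons (X 0) y) A := by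
      rw [hydef, Fin.cons_self_tail]
    have hevalp : MvPolynomial.eval (fun i => cT (X i))
        ((MvPolynomial.X 0 + 1) * (ph + MvPolynomial.X 0)) =
        (cT (X 0) + 1) * (B + cT (X 0)) := by
      simp [hBdef]
    rw [hfix, hevalp]
    refine ⟨hfHF (X 0) hx0, ?_⟩
    have hsub2 : (TCset (f (Fin.cons (X 0) y) A)).toSet ⊆
        (⋃ w ∈ insert (X 0) (TCset (X 0)).toSet,
          (((TCset (h (Fin.cons w y) (Fin.snoc A (J w)))).toSet \
              (TCset (unionFin (Fin.snoc A (J w)))).toSet) ∪ (J w).toSet)) ∪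
          (TCset (unionFin A)).toSet := by
      intro z hz
      rcases hincl (X 0) hz with h1 | h1
      · exact Or.inr h1
      · exact Or.inl h1
    refine le_trans (ncard_diff_le_of_subset_union hsub2 hUfin) ?_
    have hSfin : (insert (X 0) (TCset (X 0)).toSet).Finite :=
      (hx0 : (TCset (X 0)).toSet.Finite).insert _
    refine le_trans (ncard_biUnion_le_mul hSfin _ (B + cT (X 0))
      fun w hw => (hnode w hw).1) ?_
    exact Nat.mul_le_mul_right _ (Set.ncard_insert_le _ _)


end Aux

/-- For every `f ∈ PCSF` there is a polynomial `p_f` such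
that for all hereditarily finite sets `X̄, Ā`:
`cT(f(X̄/Ā)) ≤ p_f(cT(X₁),…,cT(Xₙ)) + cT(A₁ ∪ ⋯ ∪ Aₘ)`. -/
theorem pcsf_size_bound {n m : ℕ}
    (f : (Fin n → ZFSet) → (Fin m → ZFSet) → ZFSet) (hf : PCSF n m f) :
    ∃ p : MvPolynomial (Fin n) ℕ, ∀ (X : Fin n → ZFSet) (A : Fin m → ZFSet),
      (∀ i, IsHF (X i)) → (∀ j, IsHF (A j)) →
      cT (f X A) ≤ MvPolynomial.eval (fun i => cT (X i)) p + cT (unionFin A) := by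
  obtain ⟨p, hp⟩ := pcsf_bound hf
  refine ⟨p, fun X A hX hA => ?_⟩
  obtain ⟨hHF, hbound⟩ := hp X A hX hA
  have hT : (TCset (unionFin A)).toSet.Finite := isHF_unionFin hA
  have hsub : (TCset (f X A)).toSet ⊆
      ((TCset (f X A)).toSet \ (TCset (unionFin A)).toSet) ∪
        (TCset (unionFin A)).toSet := by
    intro z hz
    by_cases h1 : z ∈ (TCset (unionFin A)).toSet
    · exact Or.inr h1
    · exact Or.inl ⟨hz, h1⟩
  calc cT (f X A) ≤ (((TCset (f X A)).toSet \ (TCset (unionFin A)).toSet) ∪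
        (TCset (unionFin A)).toSet).ncard :=
      Set.ncard_le_ncard hsub (hHF.sdiff.union hT)
    _ ≤ ((TCset (f X A)).toSet \ (TCset (unionFin A)).toSet).ncard +
        (TCset (unionFin A)).toSet.ncard := Set.ncard_union_le _ _
    _ ≤ MvPolynomial.eval (fun i => cT (X i)) p + cT (unionFin A) :=
      add_le_add hbound le_rfl

end PCSFPaper
end
end
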